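/- A C² function u on ℝ is a solution of T_κ u = iλ u if and only if u solves the generalized eigenvalue problem x u''(x) + (κ+1) u'(x) = iλ (x u'(x) + u(x)) for all x. -/

import Mathlib

/-- The one-variable Dunkl-type operator with projection term,
extended by continuity at `x = 0` by the value `(1 + κ) f'(0)`. -/
noncomputable def Tkappa (κ : ℂ) (f : ℝ → ℂ) (x : ℝ) : ℂ :=
  if x = 0 then (1 + κ) * deriv f 0 else deriv f x + κ * (f x - f 0) / x

theorem Tkappa_eigen_iff_generalized_eigen (κ lam : ℂ) (hκ : κ ≠ 0)
    (u : ℝ → ℂ) (hu : ContDiff ℝ 2 u) :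
    (∀ x : ℝ, Tkappa κ u x = Complex.I * lam * u x) ↔
      (∀ x : ℝ, (x : ℂ) * deriv (deriv u) x + (κ + 1) * deriv u x =
        Complex.I * lam * ((x : ℂ) * deriv u x + u x)) := by
  have hu1 : Differentiable ℝ u := hu.differentiable (by norm_num)
  have hu2 : Differentiable ℝ (deriv u) := by
    have h : ContDiff ℝ ((1 : ℕ∞) + 1) u := by
      exact_mod_cast hu
    exact (contDiff_succ_iff_deriv.mp h).2.2.differentiable (by norm_num)
  set g : ℝ → ℂ := fun x => (x : ℂ) * deriv u x + κ * (u x - u 0)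
      - Complex.I * lam * ((x : ℂ) * u x) with hg_def
  have hofr : ∀ x : ℝ, HasDerivAt (fun y : ℝ => (y : ℂ)) 1 x := fun x => by
    simpa using (hasDerivAt_id x).ofReal_comp
  have hg : ∀ x : ℝ, HasDerivAt g
      (deriv u x + (x : ℂ) * deriv (deriv u) x + κ * deriv u x
        - Complex.I * lam * (u x + (x : ℂ) * deriv u x)) x := by
    intro x
    have h1 : HasDerivAt (fun y : ℝ => (y : ℂ) * deriv u y)
        (1 * deriv u x + (x : ℂ) * deriv (deriv u) x) x :=
      (hofr x).mul (hu2 x).hasDerivAt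
    have h2 : HasDerivAt (fun y : ℝ => κ * (u y - u 0)) (κ * (deriv u x - 0)) x := by
      simpa using (((hu1 x).hasDerivAt.sub_const (u 0)).const_mul κ)
    have h3 : HasDerivAt (fun y : ℝ => Complex.I * lam * ((y : ℂ) * u y))
        (Complex.I * lam * (1 * u x + (x : ℂ) * deriv u x)) x :=
      (((hofr x).mul (hu1 x).hasDerivAt).const_mul (Complex.I * lam))
    have := (h1.add h2).sub h3
    convert this using 1
    · rfl
    · rfl
    · ring
  constructor
  · intro h x
    have hg0 : g = fun _ => 0 := by
      funext y
      by_cases hy : y = 0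
      · simp [hg_def, hy]
      · have := h y
        rw [Tkappa, if_neg hy] at this
        have hyc : (y : ℂ) ≠ 0 := Complex.ofReal_ne_zero.mpr hy
        simp only [hg_def]
        field_simp at this ⊢
        linear_combination this
    have hd : HasDerivAt g 0 x := by rw [hg0]; exact hasDerivAt_const x 0
    have heq := (hg x).unique hd
    linear_combination heq
  · intro h x
    have hg' : ∀ y : ℝ, HasDerivAt g 0 y := by
      intro y
      have := hg y
      have hy0 : deriv u y + (y : ℂ) * deriv (deriv u) y + κ * deriv u y
          - Complex.I * lam * (u y + (y : ℂ) * deriv u y) = 0 := by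
        linear_combination h y
      rwa [hy0] at this
    have hgconst : ∀ y : ℝ, g y = g 0 := by
      intro y
      apply is_const_of_deriv_eq_zero (fun z => (hg' z).differentiableAt) ?_ y 0
      intro z; exact (hg' z).deriv
    have hg0 : ∀ y : ℝ, g y = 0 := by
      intro y
      rw [hgconst y]
      simp [hg_def]
    by_cases hx : x = 0
    · have := h 0
      simp only [Complex.ofReal_zero, zero_mul, zero_add] at this
      rw [hx, Tkappa, if_pos rfl]
      linear_combination this
    · rw [Tkappa, if_neg hx]
      have := hg0 x
      simp only [hg_def] at this
      have hxc : (x : ℂ) ≠ 0 := Complex.ofReal_ne_zero.mpr hx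
      field_simp
      linear_combination this
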